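/- For the pair S₁ = [[1,0],[1,1]], S₂ = [[0,1],[0,0]], the generalized spectral radius ρ(𝐒) := limsup_{n→∞} max over words (i₁,…,iₙ) ∈ {1,2}ⁿ of ρ(S_{i₁}⋯S_{iₙ})^{1/n} satisfies ρ(𝐒) ≥ 4^{1/5}, by exhibiting the word S₁⁴S₂ of length 5 whose product has spectral radius 4. -/

import Mathlib

open Matrix Filter

/-- The spectral radius of a real square matrix: the maximum of the moduli of its
complex eigenvalues. -/
noncomputable def specRad {d : ℕ} (A : Matrix (Fin d) (Fin d) ℝ) : ENNReal :=
  spectralRadius ℂ (A.map (Complex.ofReal))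

/-- The generalized spectral radius of a pair of matrices:
`limsup_{n→∞} max_{(i₁,…,iₙ)} ρ(S_{i₁} ⋯ S_{iₙ})^{1/n}`. -/
noncomputable def genSpecRad {d : ℕ} (S : Fin 2 → Matrix (Fin d) (Fin d) ℝ) : ENNReal :=
  Filter.limsup
    (fun n : ℕ =>
      ⨆ w : Fin n → Fin 2,
        specRad ((List.ofFn fun k => S (w k)).prod) ^ ((1 : ℝ) / n))
    atTop

/-- Spectrum of an upper-triangular 2×2 complex matrix with zero first diagonal entry. -/
lemma spec_tri (β γ : ℂ) : spectrum ℂ (!![0,β;0,γ] : Matrix (Fin 2) (Fin 2) ℂ) = {0, γ} := by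
  ext k
  simp only [spectrum.mem_iff, Matrix.isUnit_iff_isUnit_det,
    Set.mem_insert_iff, Set.mem_singleton_iff]
  have h1 : (algebraMap ℂ (Matrix (Fin 2) (Fin 2) ℂ)) k = !![k,0;0,k] := by
    ext i j; fin_cases i <;> fin_cases j <;>
      simp [Matrix.algebraMap_matrix_apply]
  rw [h1]
  have h2 : (!![k,0;0,k] - !![0,β;0,γ] : Matrix (Fin 2) (Fin 2) ℂ) = !![k,-β;0,k-γ] := by
    ext i j; fin_cases i <;> fin_cases j <;> simp
  rw [h2]
  simp [Matrix.det_fin_two, isUnit_iff_ne_zero, mul_eq_zero, sub_eq_zero]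
  tauto

lemma specRad_tri (b c : ℝ) : specRad !![0,b;0,c] = ‖c‖₊ := by
  have hmap : (!![0,b;0,c] : Matrix (Fin 2) (Fin 2) ℝ).map Complex.ofReal
      = !![0,(b:ℂ);0,(c:ℂ)] := by
    ext i j; fin_cases i <;> fin_cases j <;> simp
  rw [specRad, hmap, spectralRadius, spec_tri]
  rw [show ({0, (c:ℂ)} : Set ℂ) = insert 0 {(c:ℂ)} from rfl, iSup_insert, iSup_singleton]
  simp

lemma M14 : (!![1,0;1,1] : Matrix (Fin 2) (Fin 2) ℝ)^4 * !![0,1;0,0] = !![0,1;0,4] := by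
  norm_num [pow_succ, Matrix.mul_fin_two]

lemma Mpow (k : ℕ) : (!![0,1;0,4] : Matrix (Fin 2) (Fin 2) ℝ)^(k+1) = !![0,4^k;0,4^(k+1)] := by
  induction k with
  | zero => norm_num [Matrix.mul_fin_two]
  | succ k ih => rw [pow_succ, ih]; rw [Matrix.mul_fin_two]; ring_nf

lemma word_prod (S : Fin 2 → Matrix (Fin 2) (Fin 2) ℝ) (k : ℕ) :
    (List.ofFn fun j : Fin (5*k) => S (if (j:ℕ) % 5 = 4 then 1 else 0)).prod
      = ((S 0)^4 * (S 1))^k := by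
  induction k with
  | zero => simp
  | succ k ih =>
    have h5 : 5*(k+1) = 5*k + 5 := by ring
    rw [List.ofFn_congr h5, List.ofFn_add, List.prod_append]
    have h1 : (List.ofFn fun i : Fin (5*k) =>
        S (if ((Fin.cast h5.symm (Fin.castLE (by omega) i) : Fin (5*(k+1))) : ℕ) % 5 = 4 then 1 else 0))
        = List.ofFn fun j : Fin (5*k) => S (if (j:ℕ) % 5 = 4 then 1 else 0) := by
      congr 1
    rw [h1, ih]
    have h2 : ∀ i : Fin 5,
        ((Fin.cast h5.symm (Fin.natAdd (5*k) i) : Fin (5*(k+1))) : ℕ) % 5 = (i : ℕ) := by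
      intro i; simp [Nat.mul_add_mod, Nat.mod_eq_of_lt i.isLt]
    have h3 : (List.ofFn fun i : Fin 5 =>
        S (if ((Fin.cast h5.symm (Fin.natAdd (5*k) i) : Fin (5*(k+1))) : ℕ) % 5 = 4 then 1 else 0))
        = [S 0, S 0, S 0, S 0, S 1] := by
      simp only [List.ofFn_succ, List.ofFn_zero, h2]
      norm_num
    rw [h3, pow_succ]
    simp [pow_succ, mul_assoc]

theorem stmt16 (S : Fin 2 → Matrix (Fin 2) (Fin 2) ℝ)
    (h₁ : S 0 = !![1, 0; 1, 1]) (h₂ : S 1 = !![0, 1; 0, 0]) :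
    specRad ((S 0) ^ 4 * S 1) = 4 ∧
    (4 : ENNReal) ^ ((1 : ℝ) / 5) ≤ genSpecRad S := by
  have hM : (S 0) ^ 4 * S 1 = !![0,1;0,4] := by rw [h₁, h₂, M14]
  constructor
  · rw [hM, specRad_tri]
    norm_num
  · -- for each k, the word of length 5*(k+1) gives value 4^(1/5)
    have key : ∀ k : ℕ,
        (4 : ENNReal) ^ ((1 : ℝ) / 5) ≤
          ⨆ w : Fin (5*(k+1)) → Fin 2,
            specRad ((List.ofFn fun j => S (w j)).prod) ^ ((1 : ℝ) / (5*(k+1) : ℕ)) := by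
      intro k
      have hle := le_iSup (fun w : Fin (5*(k+1)) → Fin 2 =>
        specRad ((List.ofFn fun j => S (w j)).prod) ^ ((1 : ℝ) / (5*(k+1) : ℕ)))
        (fun j => if (j:ℕ) % 5 = 4 then 1 else 0)
      refine le_trans (le_of_eq ?_) hle
      rw [word_prod, hM, Mpow, specRad_tri]
      have hnorm : (‖(4:ℝ)^(k+1)‖₊ : ENNReal) = (4 : ENNReal)^(k+1) := by
        rw [nnnorm_pow]
        norm_num
      rw [hnorm]
      rw [← ENNReal.rpow_natCast (4 : ENNReal) (k+1), ← ENNReal.rpow_mul]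
      congr 1
      push_cast
      field_simp
    refine le_limsup_of_frequently_le' ?_
    rw [Filter.frequently_atTop]
    intro a
    refine ⟨5*(a+1), by omega, key a⟩
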